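/- For every squarefree positive integer q and every real number t, Σ_{ℓ∣q} ∏_{p∣ℓ} [ (1 − p^{−1/2−it})²·(1 − p^{−1/2+it})² / ((1 − p^{−1−2it})·(1 − p^{−1+2it})) ] = 2^{ω(q)} · (ν(q)/q) · ∏_{p∣q} [ (1 − p^{−1/2−it})·(1 − p^{−1/2+it}) / ((1 − p^{−1−2it})·(1 − p^{−1+2it})) ]. (This is the second identity of Lemma 3.4 of the paper, expressing Σ_{ℓ∣q} ζ_ℓ(1+2it)ζ_ℓ(1−2it)/(ζ_ℓ(1/2+it)²ζ_ℓ(1/2−it)²) in closed form.) -/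

import Mathlib

open Finset Complex

lemma aux_sum (q : ℕ) (hq : Squarefree q) (f : ℕ → ℂ) :
    ∑ ℓ ∈ q.divisors, ∏ p ∈ ℓ.primeFactors, f p = ∏ p ∈ q.primeFactors, (1 + f p) := by
  have h0 : q ≠ 0 := hq.ne_zero
  have : ∑ ℓ ∈ q.divisors, ∏ p ∈ ℓ.primeFactors, f p
      = ∑ t ∈ q.primeFactors.powerset, ∏ p ∈ t, f p := by
    refine Finset.sum_nbij' (fun ℓ => ℓ.primeFactors) (fun t => ∏ p ∈ t, p) ?_ ?_ ?_ ?_ ?_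
    · intro ℓ hℓ
      rw [Finset.mem_powerset]
      exact Nat.primeFactors_mono (Nat.dvd_of_mem_divisors hℓ) h0
    · intro t ht
      rw [Finset.mem_powerset] at ht
      rw [Nat.mem_divisors]
      refine ⟨?_, h0⟩
      calc (∏ p ∈ t, p) ∣ ∏ p ∈ q.primeFactors, p :=
            Finset.prod_dvd_prod_of_subset _ _ _ ht
        _ = q := Nat.prod_primeFactors_of_squarefree hq
    · intro ℓ hℓ
      exact Nat.prod_primeFactors_of_squarefree
        (hq.squarefree_of_dvd (Nat.dvd_of_mem_divisors hℓ))
    · intro t ht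
      rw [Finset.mem_powerset] at ht
      exact Nat.primeFactors_prod (fun p hp => Nat.prime_of_mem_primeFactors (ht hp))
    · intro ℓ hℓ; rfl
  rw [this]
  rw [show (fun p => 1 + f p) = fun p => f p + 1 by funext p; ring]
  rw [Finset.prod_add]
  apply Finset.sum_congr rfl
  intro t ht
  simp

lemma aux_prime (p : ℕ) (hp : p.Prime) (t : ℝ) :
    1 + ((1 - (p : ℂ) ^ (-(1 : ℂ) / 2 - (t : ℂ) * I)) ^ 2 *
        (1 - (p : ℂ) ^ (-(1 : ℂ) / 2 + (t : ℂ) * I)) ^ 2 /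
        ((1 - (p : ℂ) ^ (-(1 : ℂ) - 2 * (t : ℂ) * I)) *
          (1 - (p : ℂ) ^ (-(1 : ℂ) + 2 * (t : ℂ) * I)))) =
    2 * (1 + (p : ℂ)⁻¹) *
      ((1 - (p : ℂ) ^ (-(1 : ℂ) / 2 - (t : ℂ) * I)) *
        (1 - (p : ℂ) ^ (-(1 : ℂ) / 2 + (t : ℂ) * I)) /
        ((1 - (p : ℂ) ^ (-(1 : ℂ) - 2 * (t : ℂ) * I)) *
          (1 - (p : ℂ) ^ (-(1 : ℂ) + 2 * (t : ℂ) * I)))) := by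
  have hp0 : (p : ℂ) ≠ 0 := Nat.cast_ne_zero.mpr hp.ne_zero
  have hp1 : (1 : ℝ) < (p : ℝ) := by exact_mod_cast hp.one_lt
  set a : ℂ := (p : ℂ) ^ (-(1 : ℂ) / 2 - (t : ℂ) * I) with ha
  set b : ℂ := (p : ℂ) ^ (-(1 : ℂ) / 2 + (t : ℂ) * I) with hb
  have hu : (p : ℂ) ^ (-(1 : ℂ) - 2 * (t : ℂ) * I) = a * a := by
    rw [ha, ← Complex.cpow_add _ _ hp0]; ring_nf
  have hv : (p : ℂ) ^ (-(1 : ℂ) + 2 * (t : ℂ) * I) = b * b := by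
    rw [hb, ← Complex.cpow_add _ _ hp0]; ring_nf
  have hab : (p : ℂ)⁻¹ = a * b := by
    rw [ha, hb, ← Complex.cpow_add _ _ hp0]
    rw [show (-(1:ℂ)/2 - t*I) + (-(1:ℂ)/2 + t*I) = -1 by ring, Complex.cpow_neg_one]
  have habs : ∀ s : ℂ, s.re = -1 → 1 - (p : ℂ) ^ s ≠ 0 := by
    intro s hs h
    have h1 : (p : ℂ) ^ s = 1 := by linear_combination -h
    have heq := Complex.norm_cpow_eq_rpow_re_of_pos (x := (p : ℝ)) (by linarith) s
    rw [show ((p:ℝ) : ℂ) = (p : ℂ) by norm_cast, h1, hs] at heq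
    simp only [norm_one] at heq
    have hlt : (p : ℝ) ^ (-1 : ℝ) < 1 := by
      rw [Real.rpow_neg_one, inv_lt_one_iff₀]; right; exact hp1
    rw [← heq] at hlt
    exact lt_irrefl _ hlt
  have h1 : 1 - (p : ℂ) ^ (-(1 : ℂ) - 2 * (t : ℂ) * I) ≠ 0 := habs _ (by simp)
  have h2 : 1 - (p : ℂ) ^ (-(1 : ℂ) + 2 * (t : ℂ) * I) ≠ 0 := habs _ (by simp)
  rw [hab]
  rw [hu] at h1
  rw [hv] at h2
  rw [hu, hv]
  have h1' : 1 - a ^ 2 ≠ 0 := by rwa [sq]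
  have h2' : 1 - b ^ 2 ≠ 0 := by rwa [sq]
  field_simp
  ring

theorem stmt_3 (q : ℕ) (hq : Squarefree q) (t : ℝ) :
    ∑ ℓ ∈ q.divisors, ∏ p ∈ ℓ.primeFactors,
      ((1 - (p : ℂ) ^ (-(1 : ℂ) / 2 - (t : ℂ) * I)) ^ 2 *
        (1 - (p : ℂ) ^ (-(1 : ℂ) / 2 + (t : ℂ) * I)) ^ 2 /
        ((1 - (p : ℂ) ^ (-(1 : ℂ) - 2 * (t : ℂ) * I)) *
          (1 - (p : ℂ) ^ (-(1 : ℂ) + 2 * (t : ℂ) * I)))) =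
    2 ^ q.primeFactors.card *
      (((q : ℂ) * ∏ p ∈ q.primeFactors, (1 + (p : ℂ)⁻¹)) / (q : ℂ)) *
      ∏ p ∈ q.primeFactors,
        ((1 - (p : ℂ) ^ (-(1 : ℂ) / 2 - (t : ℂ) * I)) *
          (1 - (p : ℂ) ^ (-(1 : ℂ) / 2 + (t : ℂ) * I)) /
          ((1 - (p : ℂ) ^ (-(1 : ℂ) - 2 * (t : ℂ) * I)) *
            (1 - (p : ℂ) ^ (-(1 : ℂ) + 2 * (t : ℂ) * I)))) := by
  have hq0 : (q : ℂ) ≠ 0 := Nat.cast_ne_zero.mpr hq.ne_zero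
  rw [mul_comm (q:ℂ) _, mul_div_assoc, div_self hq0, mul_one]
  rw [aux_sum q hq]
  rw [← Finset.prod_const (2 : ℂ), ← Finset.prod_mul_distrib, ← Finset.prod_mul_distrib]
  exact Finset.prod_congr rfl fun p hp => aux_prime p (Nat.prime_of_mem_primeFactors hp) t
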